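/- Let s be a grid profile whose earliest departure time s_1 satisfies s_1 ≠ t⁻. Then there exists a better response path from s to a grid profile s′ such that: (i) if s_1 < t⁻, then the earliest departure time of s′ is strictly later than s_1; and (ii) if t⁻ < s_1, then the earliest departure time of s′ equals t⁻. -/

import Mathlib

/-- Schedule delay cost function `V(d) = β·max(−d,0) + γ·max(d,0)`. -/
noncomputable def sdc (β γ d : ℝ) : ℝ := β * max (-d) 0 + γ * max d 0

/-- Destination arrival times: `d 0 = s 0`, `d (k+1) = max (d k + m/μ) (s (k+1))`. -/
noncomputable def arr (m μ : ℝ) (s : ℕ → ℝ) : ℕ → ℝ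
  | 0 => s 0
  | k + 1 => max (arr m μ s k + m / μ) (s (k + 1))

/-- Trip cost of the `k`-th departing user. -/
noncomputable def cost (β γ m μ : ℝ) (s : ℕ → ℝ) (k : ℕ) : ℝ :=
  (arr m μ s k - s k) + sdc β γ (arr m μ s k)

/-- A time profile: strictly increasing departure times (0-indexed, users `0,…,P-1`). -/
def IsProfile (P : ℕ) (s : ℕ → ℝ) : Prop := ∀ i, i + 1 < P → s i < s (i + 1)

/-- Equilibrium departure time of the first user. -/
noncomputable def tminus (P : ℕ) (m μ β γ : ℝ) : ℝ :=
  -(m * ((P : ℝ) - 1) / μ) * (γ / (β + γ))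

/-- Equilibrium departure time of the last user. -/
noncomputable def tplus (P : ℕ) (m μ β γ : ℝ) : ℝ :=
  tminus P m μ β γ + m * ((P : ℝ) - 1) / μ

/-- Equilibrium trip cost. -/
noncomputable def rho (P : ℕ) (m μ β γ : ℝ) : ℝ :=
  (m * ((P : ℝ) - 1) / μ) * (β * γ / (β + γ))

/-- The equilibrium profile `s^e` (0-indexed: index `k` is the `(k+1)`-st departing user). -/
noncomputable def se (P : ℕ) (m μ β γ : ℝ) (k : ℕ) : ℝ :=
  if (k : ℤ) ≤ ⌊γ * ((P : ℝ) - 1) / (β + γ)⌋ then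
    tminus P m μ β γ + (m * (1 - β) / μ) * (k : ℝ)
  else
    tminus P m μ β γ + (m * (1 + γ) / μ) * (k : ℝ) - m * γ * ((P : ℝ) - 1) / μ

/-- The forecasted cost `Ĉ(t | s) = c`, as a relation (the cases are mutually exclusive
for `t` distinct from all departure times of the strictly increasing profile `s`). -/
def Forecast (P : ℕ) (β γ m μ : ℝ) (s : ℕ → ℝ) (t c : ℝ) : Prop :=
  (∃ k, k + 1 < P ∧ s k < t ∧ t < s (k + 1) ∧
      arr m μ s (k + 1) - arr m μ s k = m / μ ∧
      c = cost β γ m μ s k +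
        (cost β γ m μ s (k + 1) - cost β γ m μ s k) / (s (k + 1) - s k) * (t - s k)) ∨
  (∃ k, k + 1 < P ∧ s k < t ∧ t < s (k + 1) ∧
      m / μ < arr m μ s (k + 1) - arr m μ s k ∧
      ((t ≤ arr m μ s k ∧
          c = cost β γ m μ s k +
            (sdc β γ (arr m μ s k) - cost β γ m μ s k) / (arr m μ s k - s k) * (t - s k)) ∨
        (arr m μ s k < t ∧ c = sdc β γ t))) ∨
  (s (P - 1) < t ∧ t < arr m μ s (P - 1) ∧
      c = cost β γ m μ s (P - 1) +
        (sdc β γ (arr m μ s (P - 1)) - cost β γ m μ s (P - 1)) /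
          (arr m μ s (P - 1) - s (P - 1)) * (t - s (P - 1))) ∨
  ((t < s 0 ∨ arr m μ s (P - 1) ≤ t) ∧ c = sdc β γ t)

/-- Departure times lie on the grid of integer multiples of `Δs` within `[-S, S]`. -/
def OnGrid (P : ℕ) (Δs S : ℝ) (s : ℕ → ℝ) : Prop :=
  ∀ k, k < P → (∃ z : ℤ, s k = (z : ℝ) * Δs) ∧ -S ≤ s k ∧ s k ≤ S

/-- A grid profile. -/
def GridProfile (P : ℕ) (Δs S : ℝ) (s : ℕ → ℝ) : Prop :=
  IsProfile P s ∧ OnGrid P Δs S s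

/-- One better response: the user at departure order `j` of `s` moves to the new time `t`
(whose forecasted cost in `s` is strictly below that user's current trip cost); `s'` is
the resulting profile, i.e. its departure times are those of `s` with `s j` replaced by `t`. -/
def BetterStep (P : ℕ) (β γ m μ : ℝ) (s s' : ℕ → ℝ) (j : ℕ) (t : ℝ) : Prop :=
  j < P ∧ (∀ k, k < P → s k ≠ t) ∧
  (∃ c, Forecast P β γ m μ s t c ∧ c < cost β γ m μ s j) ∧
  Multiset.map s' (Finset.range P).val =
    t ::ₘ (Multiset.map s (Finset.range P).val).erase (s j)

/-- A better response path between grid profiles. -/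
def BRPath (P : ℕ) (β γ m μ Δs S : ℝ) (s s' : ℕ → ℝ) : Prop :=
  ∃ (N : ℕ) (f : ℕ → ℕ → ℝ), f 0 = s ∧ f N = s' ∧
    (∀ i, i ≤ N → GridProfile P Δs S (f i)) ∧
    ∀ i, i < N → ∃ j t, BetterStep P β γ m μ (f i) (f (i + 1)) j t

section Helpers

lemma arr_zero' (m μ : ℝ) (s : ℕ → ℝ) : arr m μ s 0 = s 0 := rfl
lemma arr_succ' (m μ : ℝ) (s : ℕ → ℝ) (k : ℕ) :
    arr m μ s (k+1) = max (arr m μ s k + m / μ) (s (k+1)) := rfl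

lemma arr_ge (m μ : ℝ) (s : ℕ → ℝ) (k : ℕ) : s k ≤ arr m μ s k := by
  cases k with
  | zero => simp [arr_zero']
  | succ n => rw [arr_succ']; exact le_max_right _ _

lemma arr_step (m μ : ℝ) (s : ℕ → ℝ) (k : ℕ) :
    arr m μ s k + m / μ ≤ arr m μ s (k+1) := by
  rw [arr_succ']; exact le_max_left _ _

lemma arr_lb (m μ : ℝ) (s : ℕ → ℝ) (k : ℕ) :
    s 0 + k * (m / μ) ≤ arr m μ s k := by
  induction k with
  | zero => simp [arr_zero']
  | succ n ih =>
    have := arr_step m μ s n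
    push_cast
    nlinarith

lemma arr_grid (m μ Δs : ℝ) (s : ℕ → ℝ) (hgm : ∃ z : ℤ, m / μ = (z : ℝ) * Δs)
    (k : ℕ) (hs : ∀ i, i ≤ k → ∃ z : ℤ, s i = (z : ℝ) * Δs) :
    ∃ z : ℤ, arr m μ s k = (z : ℝ) * Δs := by
  induction k with
  | zero => exact hs 0 le_rfl
  | succ n ih =>
    obtain ⟨z1, hz1⟩ := ih (fun i hi => hs i (hi.trans (Nat.le_succ n)))
    obtain ⟨z2, hz2⟩ := hgm
    obtain ⟨z3, hz3⟩ := hs (n+1) le_rfl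
    rw [arr_succ']
    rcases max_cases (arr m μ s n + m / μ) (s (n+1)) with ⟨h, _⟩ | ⟨h, _⟩
    · exact ⟨z1 + z2, by rw [h, hz1, hz2]; push_cast; ring⟩
    · exact ⟨z3, by rw [h, hz3]⟩

lemma grid_lt {a b Δs : ℝ} (hΔs : 0 < Δs) (ha : ∃ z : ℤ, a = (z : ℝ) * Δs)
    (hb : ∃ z : ℤ, b = (z : ℝ) * Δs) (h : a < b) : a + Δs ≤ b := by
  obtain ⟨z1, rfl⟩ := ha; obtain ⟨z2, rfl⟩ := hb
  have hz : z1 < z2 := by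
    by_contra hc
    push_neg at hc
    have : (z2 : ℝ) ≤ z1 := by exact_mod_cast hc
    nlinarith
  have : (z1 : ℝ) + 1 ≤ z2 := by exact_mod_cast hz
  nlinarith

lemma sdc_nonpos {β γ d : ℝ} (h : d ≤ 0) : sdc β γ d = -(β * d) := by
  unfold sdc
  rw [max_eq_left (by linarith), max_eq_right h]
  ring

lemma sdc_pos' {β γ d : ℝ} (h : 0 ≤ d) : sdc β γ d = γ * d := by
  unfold sdc
  rw [max_eq_right (by linarith), max_eq_left h]
  ring

lemma sdc_ge {β γ d : ℝ} (hβ : 0 ≤ β) (hγ : 0 ≤ γ) : γ * d ≤ sdc β γ d := by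
  unfold sdc
  have h1 : 0 ≤ β * max (-d) 0 := mul_nonneg hβ (le_max_right _ _)
  nlinarith [le_max_left d 0, mul_le_mul_of_nonneg_left (le_max_left d 0) hγ]

lemma cost_zero (β γ m μ : ℝ) (s : ℕ → ℝ) :
    cost β γ m μ s 0 = sdc β γ (s 0) := by
  unfold cost
  rw [arr_zero']
  ring

lemma prof_lt {P : ℕ} {s : ℕ → ℝ} (h : IsProfile P s) :
    ∀ {i j : ℕ}, i < j → j < P → s i < s j := by
  intro i j hij hj
  induction j with
  | zero => omega
  | succ n ih =>
    rcases Nat.lt_succ_iff_lt_or_eq.1 hij with h' | h'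
    · exact (ih h' (by omega)).trans (h n hj)
    · subst h'; exact h i hj

lemma ms_prepend (Q : ℕ) (s : ℕ → ℝ) (c : ℝ) :
    Multiset.map (fun k => if k = 0 then c else s (k-1)) (Finset.range (Q+1)).val =
      c ::ₘ (Multiset.map s (Finset.range (Q+1)).val).erase (s Q) := by
  have h1 : (Finset.range (Q+1)).val = ↑(List.range (Q+1)) := rfl
  rw [h1]
  have hr : List.range (Q+1) = List.range Q ++ [Q] := List.range_succ
  have hr2 : List.range (Q+1) = 0 :: List.map (· + 1) (List.range Q) :=
    List.range_succ_eq_map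
  calc Multiset.map (fun k => if k = 0 then c else s (k-1)) ↑(List.range (Q+1))
      = ↑(List.map (fun k => if k = 0 then c else s (k-1)) (List.range (Q+1))) := by
        simp [Multiset.map_coe]
    _ = ↑(c :: List.map s (List.range Q)) := by
        rw [hr2]
        congr 1
        simp
    _ = c ::ₘ ↑(List.map s (List.range Q)) := rfl
    _ = c ::ₘ (Multiset.map s ↑(List.range (Q+1))).erase (s Q) := by
        congr 1
        rw [hr]
        have : Multiset.map s ↑(List.range Q ++ [Q]) =
            s Q ::ₘ ↑(List.map s (List.range Q)) := by
          rw [Multiset.map_coe]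
          refine Multiset.coe_eq_coe.2 ?_
          rw [List.map_append]
          exact List.perm_append_singleton _ _
        rw [this, Multiset.erase_cons_head]

lemma ms_replace (P r : ℕ) (hr : r < P) (s : ℕ → ℝ) (t : ℝ) :
    Multiset.map (fun k => if k < r then s (k+1) else if k = r then t else s k)
        (Finset.range P).val =
      t ::ₘ (Multiset.map s (Finset.range P).val).erase (s 0) := by
  set f := fun k => if k < r then s (k+1) else if k = r then t else s k with hf
  obtain ⟨q, rfl⟩ : ∃ q, P = (r+1) + q := ⟨P - (r+1), by omega⟩
  have h1 : (Finset.range ((r+1)+q)).val = ↑(List.range ((r+1)+q)) := rfl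
  rw [h1]
  have hsplit : List.range ((r+1)+q) = List.range (r+1) ++ List.map ((r+1) + ·) (List.range q) :=
    List.range_add
  have hR : Multiset.map s ↑(List.range ((r+1)+q)) =
      s 0 ::ₘ ↑(List.map (fun i => s (i+1)) (List.range (r + q))) := by
    have : (r+1)+q = (r+q)+1 := by omega
    rw [this, Multiset.map_coe, List.range_succ_eq_map, List.map_cons, List.map_map]
    rfl
  rw [hR, Multiset.erase_cons_head]
  have hA : List.map f (List.range (r+1)) =
      List.map (fun i => s (i+1)) (List.range r) ++ [t] := by
    rw [List.range_succ, List.map_append]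
    congr 1
    · apply List.map_congr_left
      intro i hi
      simp only [hf]
      rw [if_pos (List.mem_range.1 hi)]
    · simp [hf]
  have hB : List.map f (List.map ((r+1) + ·) (List.range q)) =
      List.map (fun i => s ((r+1) + i)) (List.range q) := by
    rw [List.map_map]
    apply List.map_congr_left
    intro i _
    simp only [Function.comp, hf]
    rw [if_neg (by omega), if_neg (by omega)]
  rw [Multiset.map_coe, hsplit, List.map_append, hA, hB]
  refine Multiset.coe_eq_coe.2 ?_
  have hsp : List.map (fun i => s (i+1)) (List.range (r+q)) =
      List.map (fun i => s (i+1)) (List.range r) ++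
        List.map (fun i => s ((r+1) + i)) (List.range q) := by
    rw [List.range_add, List.map_append, List.map_map]
    congr 1
    apply List.map_congr_left
    intro i _
    simp only [Function.comp]
    congr 1
    omega
  rw [hsp, List.append_assoc]
  exact List.perm_middle

lemma brpath_of_step {P : ℕ} {β γ m μ Δs S : ℝ} {s s' : ℕ → ℝ} {j : ℕ} {t : ℝ}
    (h1 : GridProfile P Δs S s) (h2 : GridProfile P Δs S s')
    (hstep : BetterStep P β γ m μ s s' j t) : BRPath P β γ m μ Δs S s s' := by
  refine ⟨1, fun i => if i = 0 then s else s', by simp, by simp, ?_, ?_⟩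
  · intro i _
    by_cases h : i = 0 <;> simp [h, h1, h2]
  · intro i hi
    have hi0 : i = 0 := by omega
    subst hi0
    exact ⟨j, t, by simpa using hstep⟩

end Helpers

set_option maxHeartbeats 1000000 in
theorem first_user_adjustment (P : ℕ) (hP : 2 ≤ P) (m μ β γ Δs S : ℝ)
    (hm : 0 < m) (hm1 : m ≤ 1) (hμ : 0 < μ)
    (hβ : 0 < β) (hβ1 : β < 1) (hγ : 0 < γ)
    (hΔs : 0 < Δs) (hS : 0 < S)
    (hgm : ∃ z : ℤ, m / μ = (z : ℝ) * Δs)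
    (hgt : ∃ z : ℤ, tminus P m μ β γ = (z : ℝ) * Δs)
    (hgtp : ∃ z : ℤ, tplus P m μ β γ = (z : ℝ) * Δs)
    (hgse : ∀ k, k < P → ∃ z : ℤ, se P m μ β γ k = (z : ℝ) * Δs)
    (hSt : -S < tminus P m μ β γ) (hStp : tplus P m μ β γ < S)
    (s : ℕ → ℝ) (hgrid : GridProfile P Δs S s)
    (hne : s 0 ≠ tminus P m μ β γ) :
    ∃ s' : ℕ → ℝ, BRPath P β γ m μ Δs S s s' ∧
      (s 0 < tminus P m μ β γ → s 0 < s' 0) ∧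
      (tminus P m μ β γ < s 0 → s' 0 = tminus P m μ β γ) := by
    classical
  obtain ⟨hprof, hongrid⟩ := hgrid
  have hmle : ∀ i j : ℕ, i ≤ j → j < P → s i ≤ s j := by
    intro i j hij hj
    rcases eq_or_lt_of_le hij with h | h
    · rw [h]
    · exact le_of_lt (prof_lt hprof h hj)
  have hmup : 0 < m / μ := div_pos hm hμ
  have hPc : ((P - 1 : ℕ) : ℝ) = (P : ℝ) - 1 := by
    have : (1:ℕ) ≤ P := by omega
    push_cast [this]
    ring
  have hP1 : (1:ℝ) ≤ (P:ℝ) - 1 := by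
    have : (2:ℝ) ≤ P := by exact_mod_cast hP
    linarith
  have hds_le : Δs ≤ m / μ := by
    obtain ⟨z, hz⟩ := hgm
    have hz0 : (0:ℝ) < z := by nlinarith
    have hz1 : (1:ℝ) ≤ z := by
      have : (0:ℤ) < z := by exact_mod_cast hz0
      exact_mod_cast this
    nlinarith
  have hmdiv : m * ((P:ℝ) - 1) / μ = ((P:ℝ) - 1) * (m / μ) := by ring
  have htmid : tminus P m μ β γ * (β + γ) = -(γ * (((P:ℝ) - 1) * (m / μ))) := by
    unfold tminus
    field_simp
  have htm_neg : tminus P m μ β γ < 0 := by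
    have hbg : 0 < β + γ := by linarith
    nlinarith [mul_pos (mul_pos hγ (lt_of_lt_of_le zero_lt_one hP1)) hmup]
  have htp : tplus P m μ β γ = tminus P m μ β γ + ((P:ℝ) - 1) * (m / μ) := by
    unfold tplus
    rw [hmdiv]
  rcases hne.lt_or_gt with hlt | hgt2
  · -- case (a) : s 0 < t⁻
    set T := tminus P m μ β γ with hT
    have hs0g : ∃ z : ℤ, s 0 = (z : ℝ) * Δs := (hongrid 0 (by omega)).1
    have hs0d : s 0 + Δs ≤ T := grid_lt hΔs hs0g hgt hlt
    -- the block end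
    set r := Nat.findGreatest (fun k => arr m μ s k ≤ s 0 + k * (m / μ)) (P - 1) with hrdef
    have hrle : r ≤ P - 1 := Nat.findGreatest_le _
    have hrP : r < P := by omega
    have hpred : arr m μ s r ≤ s 0 + r * (m / μ) := by
      have h0 : arr m μ s 0 ≤ s 0 + (0:ℕ) * (m / μ) := by
        rw [arr_zero']; push_cast; linarith
      exact Nat.findGreatest_spec (P := fun k => arr m μ s k ≤ s 0 + k * (m / μ))
        (Nat.zero_le _) h0
    set t := arr m μ s r + Δs with ht
    have harr_ge_sr : s r ≤ arr m μ s r := arr_ge m μ s r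
    have hsrt : s r < t := by rw [ht]; linarith
    have hrcast : (r : ℝ) ≤ (P : ℝ) - 1 := by
      rw [← hPc]; exact_mod_cast hrle
    have htub : t ≤ s 0 + ((P:ℝ) - 1) * (m / μ) + Δs := by
      rw [ht]
      have : (r : ℝ) * (m / μ) ≤ ((P:ℝ) - 1) * (m / μ) :=
        mul_le_mul_of_nonneg_right hrcast (le_of_lt hmup)
      linarith
    have htS : t ≤ S := by
      have : t ≤ T + ((P:ℝ) - 1) * (m / μ) := by linarith
      rw [htp] at hStp
      linarith
    have hgap : r + 1 < P → s (r+1) = arr m μ s (r+1) ∧ arr m μ s r + m / μ < s (r+1) := by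
      intro hrp1
      have hng : ¬ (arr m μ s (r+1) ≤ s 0 + ((r+1 : ℕ) : ℝ) * (m / μ)) := by
        apply Nat.findGreatest_is_greatest
          (P := fun k => arr m μ s k ≤ s 0 + (k : ℝ) * (m / μ)) (n := P - 1) (k := r + 1)
        · rw [← hrdef]; omega
        · omega
      push_neg at hng
      have h1 : arr m μ s r + m / μ < arr m μ s (r+1) := by
        push_cast at hng
        linarith
      have h2 : arr m μ s (r+1) = s (r+1) := by
        rw [arr_succ'] at h1 ⊢
        rcases max_cases (arr m μ s r + m / μ) (s (r+1)) with ⟨h, _⟩ | ⟨h, _⟩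
        · rw [h] at h1; linarith
        · exact h
      exact ⟨h2.symm, by rw [← h2]; exact h1⟩
    have htlt : r + 1 < P → t < s (r + 1) := by
      intro hrp1
      have := (hgap hrp1).2
      rw [ht]; linarith
    have h0r : s 0 ≤ s r := hmle 0 r (Nat.zero_le r) hrP
    clear_value r t
    -- key cost inequality
    have hcost0 : cost β γ m μ s 0 = sdc β γ (s 0) := cost_zero β γ m μ s
    have hs0neg : s 0 < 0 := by linarith
    have hkey : sdc β γ t < sdc β γ (s 0) := by
      rw [sdc_nonpos (le_of_lt hs0neg)]
      rcases le_or_gt t 0 with h0 | h0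
      · rw [sdc_nonpos h0]
        have : s 0 < t := by linarith
        nlinarith
      · rw [sdc_pos' (le_of_lt h0)]
        have hbg : 0 < β + γ := by linarith
        nlinarith
    -- new profile
    set s' := fun k => if k < r then s (k+1) else if k = r then t else s k with hs'
    have hs'r : s' r = t := by simp [hs']
    have hs'lo : ∀ k, k < r → s' k = s (k+1) := by intro k hk; simp [hs', hk]
    have hs'hi : ∀ k, r < k → s' k = s k := by
      intro k hk
      simp only [hs']
      rw [if_neg (by omega), if_neg (by omega)]
    have hne_t : ∀ k, k < P → s k ≠ t := by
      intro k hkP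
      rcases le_or_gt k r with hkr | hkr
      · have : s k ≤ s r := hmle k r hkr hrP
        linarith
      · have hrp1 : r + 1 < P := by omega
        have h1 : s (r+1) ≤ s k := hmle (r+1) k hkr hkP
        have := htlt hrp1
        linarith
    have hforecast : Forecast P β γ m μ s t (sdc β γ t) := by
      by_cases hrp1 : r + 1 < P
      · refine Or.inr (Or.inl ⟨r, hrp1, hsrt, htlt hrp1, ?_, Or.inr ⟨by rw [ht]; linarith, rfl⟩⟩)
        have h2 := (hgap hrp1).2
        rw [← (hgap hrp1).1]
        linarith
      · have hrPm : r = P - 1 := by omega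
        refine Or.inr (Or.inr (Or.inr ⟨Or.inr ?_, rfl⟩))
        rw [← hrPm, ht]
        linarith
    have hstep : BetterStep P β γ m μ s s' 0 t := by
      refine ⟨by omega, hne_t, ⟨sdc β γ t, hforecast, by rw [hcost0]; exact hkey⟩, ?_⟩
      exact ms_replace P r hrP s t
    have hgrid' : GridProfile P Δs S s' := by
      constructor
      · intro i hi
        rcases lt_trichotomy (i+1) r with h | h | h
        · rw [hs'lo i (by omega), hs'lo (i+1) h]
          exact hprof (i+1) (by omega)
        · rw [hs'lo i (by omega), h, hs'r]
          exact hsrt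
        · rcases Nat.lt_or_ge i r with h2 | h2
          · omega
          · rcases eq_or_lt_of_le h2 with h3 | h3
            · rw [← h3, hs'r, hs'hi (r+1) (by omega)]
              exact htlt (by omega)
            · rw [hs'hi i h3, hs'hi (i+1) (by omega)]
              exact hprof i hi
      · intro k hkP
        rcases lt_trichotomy k r with h | h | h
        · rw [hs'lo k h]
          exact hongrid (k+1) (by omega)
        · rw [h, hs'r]
          refine ⟨?_, ?_, htS⟩
          · obtain ⟨z, hz⟩ := arr_grid m μ Δs s hgm r
              (fun i hi => (hongrid i (by omega)).1)
            exact ⟨z + 1, by rw [ht, hz]; push_cast; ring⟩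
          · have := (hongrid 0 (by omega)).2.1
            rw [ht]
            linarith
        · rw [hs'hi k h]
          exact hongrid k hkP
    refine ⟨s', brpath_of_step ⟨hprof, hongrid⟩ hgrid' hstep, ?_, ?_⟩
    · intro _
      rcases Nat.eq_zero_or_pos r with h | h
      · rw [h] at hs'r
        rw [hs'r]
        linarith
      · rw [hs'lo 0 h]
        exact prof_lt hprof (by omega) (by omega)
    · intro h; exact absurd h (by linarith)
  · -- case (b) : t⁻ < s 0
    set T := tminus P m μ β γ with hT
    set s' := fun k => if k = 0 then T else s (k-1) with hs'
    have hs'0 : s' 0 = T := by simp [hs']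
    have harr_lb : s 0 + ((P:ℝ) - 1) * (m / μ) ≤ arr m μ s (P-1) := by
      have := arr_lb m μ s (P-1)
      rw [hPc] at this
      exact this
    have harr_gt : tplus P m μ β γ < arr m μ s (P-1) := by
      rw [htp]
      linarith
    have hcost : sdc β γ T < cost β γ m μ s (P-1) := by
      have h1 : sdc β γ T = -(β * T) := sdc_nonpos (le_of_lt htm_neg)
      have h2 : γ * arr m μ s (P-1) ≤ sdc β γ (arr m μ s (P-1)) :=
        sdc_ge (le_of_lt hβ) (le_of_lt hγ)
      have h3 : s (P-1) ≤ arr m μ s (P-1) := arr_ge m μ s (P-1)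
      unfold cost
      have hgtp' : γ * tplus P m μ β γ = -(β * T) := by
        rw [htp]
        have : T * (β + γ) = -(γ * (((P:ℝ) - 1) * (m / μ))) := htmid
        nlinarith [this]
      nlinarith [harr_gt]
    have hne_t : ∀ k, k < P → s k ≠ T := by
      intro k hkP
      have : s 0 ≤ s k := hmle 0 k (Nat.zero_le k) hkP
      linarith
    have hforecast : Forecast P β γ m μ s T (sdc β γ T) := by
      exact Or.inr (Or.inr (Or.inr ⟨Or.inl hgt2, rfl⟩))
    have hstep : BetterStep P β γ m μ s s' (P-1) T := by
      refine ⟨by omega, hne_t, ⟨sdc β γ T, hforecast, hcost⟩, ?_⟩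
      obtain ⟨Q, hQ⟩ : ∃ Q, P = Q + 1 := ⟨P - 1, by omega⟩
      have hPQ : P - 1 = Q := by omega
      rw [hPQ, hQ]
      exact ms_prepend Q s T
    have hgrid' : GridProfile P Δs S s' := by
      constructor
      · intro i hi
        rcases Nat.eq_zero_or_pos i with h | h
        · rw [h]
          simp only [hs', if_pos rfl, if_neg (by omega : (0:ℕ)+1 ≠ 0)]
          simpa using hgt2
        · simp only [hs', if_neg (by omega : i ≠ 0), if_neg (by omega : i+1 ≠ 0)]
          have : i + 1 - 1 = (i - 1) + 1 := by omega
          rw [this]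
          exact hprof (i-1) (by omega)
      · intro k hkP
        rcases Nat.eq_zero_or_pos k with h | h
        · rw [h, (by simp [hs'] : s' 0 = T)]
          refine ⟨hgt, le_of_lt hSt, ?_⟩
          have : T ≤ tplus P m μ β γ := by
            rw [htp]
            nlinarith
          linarith
        · simp only [hs', if_neg (by omega : k ≠ 0)]
          exact hongrid (k-1) (by omega)
    refine ⟨s', brpath_of_step ⟨hprof, hongrid⟩ hgrid' hstep, ?_, ?_⟩
    · intro h; exact absurd h (by linarith)
    · intro _; exact hs'0
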